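/- For each nonnegative integer j, and λ ∉ -ℕ, the function φ_{λ,j}(t) = (cosh t)^{-λ-ρ} F(λ+ρ+j, λ-ρ+1-j; 1+λ; (1+e^{2t})^{-1}) satisfies the ODE φ'' + 2ρ tanh(t) φ' + (j(j+n-2)/cosh²t) φ = (λ²-ρ²) φ on ℝ. -/

import Mathlib

open Filter

noncomputable def poch (a : ℂ) (m : ℕ) : ℂ := (ascPochhammer ℂ m).eval a

noncomputable def hyp (a b c x : ℂ) : ℂ :=
  ∑' m : ℕ, poch a m * poch b m / (m.factorial * poch c m) * x ^ m



lemma poch_zero (a : ℂ) : poch a 0 = 1 := by simp [poch]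
lemma poch_succ (a : ℂ) (m : ℕ) : poch a (m+1) = poch a m * (a + m) := by
  simp [poch, ascPochhammer_succ_right]

noncomputable def cf (a b lam : ℂ) (m : ℕ) : ℂ :=
  poch a m * poch b m / (m.factorial * poch (1+lam) m)

lemma one_add_lam_add_ne (lam : ℂ) (hlam : ∀ m : ℕ, lam ≠ -((m : ℂ) + 1)) (m : ℕ) :
    (1 + lam + m) ≠ 0 := fun h => hlam m (by linear_combination h)

lemma poch_ne (lam : ℂ) (hlam : ∀ m : ℕ, lam ≠ -((m : ℂ) + 1)) (m : ℕ) :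
    poch (1+lam) m ≠ 0 := by
  induction m with
  | zero => simp [poch_zero]
  | succ k ih => rw [poch_succ]; exact mul_ne_zero ih (one_add_lam_add_ne lam hlam k)

lemma fact_ne (m : ℕ) : ((m.factorial : ℂ)) ≠ 0 := by exact_mod_cast m.factorial_ne_zero

lemma cf_rec (a b lam : ℂ) (hlam : ∀ m : ℕ, lam ≠ -((m : ℂ) + 1)) (m : ℕ) :
    cf a b lam (m+1) * (((m:ℂ)+1) * (1 + lam + m)) = cf a b lam m * ((a+m)*(b+m)) := by
  unfold cf
  have hD1 : (((m+1).factorial : ℂ) * poch (1+lam) (m+1)) ≠ 0 :=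
    mul_ne_zero (fact_ne _) (poch_ne lam hlam _)
  have hD2 : ((m.factorial : ℂ) * poch (1+lam) m) ≠ 0 :=
    mul_ne_zero (fact_ne _) (poch_ne lam hlam _)
  rw [div_mul_eq_mul_div, div_mul_eq_mul_div, div_eq_div_iff hD1 hD2]
  rw [poch_succ, poch_succ, poch_succ, Nat.factorial_succ]
  push_cast
  ring

lemma norm_natCast_add_one (m : ℕ) : ‖((m:ℂ)+1)‖ = (m:ℝ)+1 := by
  rw [show ((m:ℂ)+1) = ((m+1 : ℕ) : ℂ) by push_cast; ring, Complex.norm_natCast]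
  push_cast; ring

lemma lin_tendsto (d : ℂ) : Tendsto (fun m : ℕ => (d + m)/((m:ℂ)+1)) atTop (nhds 1) := by
  have h0 : Tendsto (fun m : ℕ => (d - 1)/((m:ℂ)+1)) atTop (nhds 0) := by
    apply squeeze_zero_norm (a := fun m : ℕ => ‖d - 1‖ * (1/((m:ℝ)+1)))
    · intro m
      rw [norm_div, norm_natCast_add_one, mul_one_div]
    · simpa using tendsto_one_div_add_atTop_nhds_zero_nat.const_mul ‖d-1‖
  have := h0.const_add 1
  simp only [add_zero] at this
  convert this using 2 with m
  have hm : ((m:ℂ)+1) ≠ 0 := Nat.cast_add_one_ne_zero m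
  field_simp; ring

lemma ratio_tendsto (a b lam : ℂ) (hlam : ∀ m : ℕ, lam ≠ -((m : ℂ) + 1)) :
    Tendsto (fun m : ℕ => ((a+m)*(b+m))/(((m:ℂ)+1)*(1+lam+m))) atTop (nhds 1) := by
  have h := (lin_tendsto a).mul ((lin_tendsto b).div (lin_tendsto (1+lam)) one_ne_zero)
  simp only [mul_one, div_one] at h
  convert h using 2 with m
  have hm : ((m:ℂ)+1) ≠ 0 := Nat.cast_add_one_ne_zero m
  have hc : (1 + lam + m) ≠ 0 := one_add_lam_add_ne lam hlam m
  simp only [Pi.div_apply]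
  field_simp

lemma cf_succ_eq (a b lam : ℂ) (hlam : ∀ m : ℕ, lam ≠ -((m : ℂ) + 1)) (m : ℕ) :
    cf a b lam (m+1) = cf a b lam m * (((a+m)*(b+m))/(((m:ℂ)+1)*(1+lam+m))) := by
  have hm : ((m:ℂ)+1) ≠ 0 := Nat.cast_add_one_ne_zero m
  have hc : (1 + lam + m) ≠ 0 := one_add_lam_add_ne lam hlam m
  have hZ : (((m:ℂ)+1)*(1+lam+m)) ≠ 0 := mul_ne_zero hm hc
  rw [mul_div_assoc', eq_div_iff hZ]
  linear_combination cf_rec a b lam hlam m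

lemma cf_growth (a b lam : ℂ) (hlam : ∀ m : ℕ, lam ≠ -((m : ℂ) + 1))
    (q : ℝ) (hq : 1 < q) :
    ∃ C : ℝ, 0 ≤ C ∧ ∀ m, ‖cf a b lam m‖ ≤ C * q ^ m := by
  have hev : ∀ᶠ m : ℕ in atTop, ‖((a+m)*(b+m))/(((m:ℂ)+1)*(1+lam+m))‖ ≤ q := by
    have := (ratio_tendsto a b lam hlam).norm
    simp only [norm_one] at this
    exact this.eventually_le_const hq
  obtain ⟨N, hN⟩ := eventually_atTop.1 hev
  have key : ∀ m ≥ N, ‖cf a b lam (m+1)‖ ≤ q * ‖cf a b lam m‖ := by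
    intro m hm
    rw [cf_succ_eq a b lam hlam m, norm_mul]
    calc ‖cf a b lam m‖ * ‖((a+m)*(b+m))/(((m:ℂ)+1)*(1+lam+m))‖
        ≤ ‖cf a b lam m‖ * q := by
          exact mul_le_mul_of_nonneg_left (hN m hm) (norm_nonneg _)
      _ = q * ‖cf a b lam m‖ := mul_comm _ _
  set C : ℝ := ∑ i ∈ Finset.range (N+1), ‖cf a b lam i‖ with hC
  have hCnn : 0 ≤ C := Finset.sum_nonneg fun i _ => norm_nonneg _
  have hmem : ∀ i ≤ N, ‖cf a b lam i‖ ≤ C := by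
    intro i hi
    exact Finset.single_le_sum (f := fun i => ‖cf a b lam i‖)
      (fun i _ => norm_nonneg _) (Finset.mem_range.2 (Nat.lt_succ_of_le hi))
  have hq0 : 0 < q := lt_trans one_pos hq
  have hind : ∀ k, ‖cf a b lam (N+k)‖ ≤ ‖cf a b lam N‖ * q ^ k := by
    intro k
    induction k with
    | zero => simp
    | succ i ih =>
      calc ‖cf a b lam (N+i+1)‖ ≤ q * ‖cf a b lam (N+i)‖ := key _ (Nat.le_add_right N i)
        _ ≤ q * (‖cf a b lam N‖ * q ^ i) := by
            exact mul_le_mul_of_nonneg_left ih (le_of_lt hq0)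
        _ = ‖cf a b lam N‖ * q ^ (i+1) := by ring
  refine ⟨C, hCnn, fun m => ?_⟩
  have hq1 : 1 ≤ q := le_of_lt hq
  rcases le_or_gt m N with h | h
  · calc ‖cf a b lam m‖ ≤ C := hmem m h
      _ ≤ C * q ^ m := le_mul_of_one_le_right hCnn (one_le_pow₀ hq1)
  · obtain ⟨k, rfl⟩ := Nat.exists_eq_add_of_le (le_of_lt h)
    calc ‖cf a b lam (N+k)‖ ≤ ‖cf a b lam N‖ * q ^ k := hind k
      _ ≤ C * q ^ (N+k) := by
          apply mul_le_mul (hmem N le_rfl) _ (by positivity) hCnn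
          exact pow_le_pow_right₀ hq1 (Nat.le_add_left k N)

lemma cf_summable (a b lam : ℂ) (hlam : ∀ m : ℕ, lam ≠ -((m : ℂ) + 1))
    (k : ℕ) (r : ℝ) (h0 : 0 < r) (h1 : r < 1) :
    Summable (fun m : ℕ => (m:ℝ)^k * ‖cf a b lam m‖ * r ^ m) := by
  set q : ℝ := (1 + 1/r)/2 with hqdef
  have hq : 1 < q := by
    rw [hqdef]
    have : 1 < 1/r := by rw [lt_div_iff₀ h0]; linarith
    linarith
  have hqr : q * r < 1 := by
    have hqr' : q * r = (r+1)/2 := by rw [hqdef]; field_simp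
    rw [hqr']; linarith
  obtain ⟨C, hC0, hC⟩ := cf_growth a b lam hlam q hq
  refine Summable.of_nonneg_of_le (f := fun m : ℕ => C * ((m:ℝ)^k * (q*r) ^ m))
    (fun m => by positivity) (fun m => ?_) ?_
  · 
    calc (m:ℝ)^k * ‖cf a b lam m‖ * r ^ m ≤ (m:ℝ)^k * (C * q ^ m) * r ^ m := by
          apply mul_le_mul_of_nonneg_right _ (by positivity)
          exact mul_le_mul_of_nonneg_left (hC m) (by positivity)
      _ = C * ((m:ℝ)^k * (q*r) ^ m) := by rw [mul_pow]; ring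
  · apply Summable.mul_left
    apply summable_pow_mul_geometric_of_norm_lt_one
    rw [Real.norm_eq_abs, abs_of_pos (by positivity)]
    exact hqr

lemma hyp_eq (a b lam x : ℂ) : hyp a b (1+lam) x = ∑' m : ℕ, cf a b lam m * x ^ m := rfl


lemma geom_shift (k : ℕ) (x : ℝ) (h0 : 0 < x) (h1 : x < 1) :
    Summable (fun m : ℕ => ((m:ℝ)+1)^k * x^m) := by
  have hf : Summable (fun m : ℕ => (m:ℝ)^k * x^m) := by
    apply summable_pow_mul_geometric_of_norm_lt_one
    rw [Real.norm_eq_abs, abs_of_pos h0]; exact h1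
  have h2 := (summable_nat_add_iff (f := fun m : ℕ => (m:ℝ)^k * x^m) 1).2 hf
  have h3 := h2.mul_left x⁻¹
  apply h3.congr
  intro m
  push_cast
  field_simp
  ring

lemma pow_sub_le (r : ℝ) (h0 : 0 < r) (h1 : r ≤ 1) (m l : ℕ) :
    r ^ (m - l) ≤ r ^ m / r ^ l := by
  rw [le_div_iff₀ (by positivity), ← pow_add]
  exact pow_le_pow_of_le_one (le_of_lt h0) h1 (by omega)

lemma cf_summable' (a b lam : ℂ) (hlam : ∀ m : ℕ, lam ≠ -((m : ℂ) + 1))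
    (k l : ℕ) (r : ℝ) (h0 : 0 < r) (h1 : r < 1) :
    Summable (fun m : ℕ => ((m:ℝ)+1)^k * ‖cf a b lam m‖ * r ^ (m - l)) := by
  set q : ℝ := (1 + 1/r)/2 with hqdef
  have hq : 1 < q := by
    rw [hqdef]
    have : 1 < 1/r := by rw [lt_div_iff₀ h0]; linarith
    linarith
  have hqr0 : 0 < q * r := by positivity
  have hqr : q * r < 1 := by
    have hqr' : q * r = (r+1)/2 := by rw [hqdef]; field_simp
    rw [hqr']; linarith
  obtain ⟨C, hC0, hC⟩ := cf_growth a b lam hlam q hq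
  refine Summable.of_nonneg_of_le
    (f := fun m : ℕ => (C / r^l) * (((m:ℝ)+1)^k * (q*r) ^ m))
    (fun m => by positivity) (fun m => ?_) ?_
  · calc ((m:ℝ)+1)^k * ‖cf a b lam m‖ * r ^ (m-l)
        ≤ ((m:ℝ)+1)^k * (C * q ^ m) * (r ^ m / r ^ l) := by
          apply mul_le_mul
          · exact mul_le_mul_of_nonneg_left (hC m) (by positivity)
          · exact pow_sub_le r h0 (le_of_lt h1) m l
          · positivity
          · positivity
      _ = (C / r^l) * (((m:ℝ)+1)^k * (q*r) ^ m) := by rw [mul_pow]; field_simp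
  · exact (geom_shift k (q*r) hqr0 hqr).mul_left _

noncomputable def F1 (a b lam : ℂ) (x : ℂ) : ℂ := ∑' m : ℕ, (m:ℂ) * cf a b lam m * x ^ (m-1)
noncomputable def F2 (a b lam : ℂ) (x : ℂ) : ℂ :=
  ∑' m : ℕ, (m:ℂ) * ((m:ℂ)-1) * cf a b lam m * x ^ (m-2)

lemma norm_le_succ (m : ℕ) : ‖((m:ℂ))‖ ≤ (m:ℝ)+1 := by
  rw [Complex.norm_natCast]; linarith
lemma norm_sub_one_le (m : ℕ) : ‖((m:ℂ)-1)‖ ≤ (m:ℝ)+1 := by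
  calc ‖((m:ℂ)-1)‖ ≤ ‖((m:ℂ))‖ + ‖(1:ℂ)‖ := norm_sub_le _ _
    _ = (m:ℝ) + 1 := by rw [Complex.norm_natCast, norm_one]

lemma radius_facts (x : ℂ) (hx : ‖x‖ < 1) :
    0 < (1+‖x‖)/2 ∧ (1+‖x‖)/2 < 1 ∧ ‖x‖ < (1+‖x‖)/2 := by
  have := norm_nonneg x
  refine ⟨by linarith, by linarith, by linarith⟩

lemma summable_term (a b lam : ℂ) (hlam : ∀ m : ℕ, lam ≠ -((m : ℂ) + 1))
    (x : ℂ) (hx : ‖x‖ < 1) :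
    Summable (fun m : ℕ => cf a b lam m * x ^ m) := by
  obtain ⟨h0, h1, h2⟩ := radius_facts x hx
  apply Summable.of_norm_bounded (cf_summable' a b lam hlam 0 0 _ h0 h1)
  intro m
  rw [norm_mul, norm_pow, pow_zero, one_mul, Nat.sub_zero]
  exact mul_le_mul_of_nonneg_left (pow_le_pow_left₀ (norm_nonneg x) (le_of_lt h2) m)
    (norm_nonneg _)

lemma summable_term1 (a b lam : ℂ) (hlam : ∀ m : ℕ, lam ≠ -((m : ℂ) + 1))
    (x : ℂ) (hx : ‖x‖ < 1) :
    Summable (fun m : ℕ => (m:ℂ) * cf a b lam m * x ^ (m-1)) := by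
  obtain ⟨h0, h1, h2⟩ := radius_facts x hx
  apply Summable.of_norm_bounded (cf_summable' a b lam hlam 1 1 _ h0 h1)
  intro m
  rw [norm_mul, norm_mul, norm_pow, pow_one]
  apply mul_le_mul
  · exact mul_le_mul (norm_le_succ m) le_rfl (norm_nonneg _) (by positivity)
  · exact pow_le_pow_left₀ (norm_nonneg x) (le_of_lt h2) _
  · positivity
  · positivity

lemma summable_term2 (a b lam : ℂ) (hlam : ∀ m : ℕ, lam ≠ -((m : ℂ) + 1))
    (x : ℂ) (hx : ‖x‖ < 1) :
    Summable (fun m : ℕ => (m:ℂ) * ((m:ℂ)-1) * cf a b lam m * x ^ (m-2)) := by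
  obtain ⟨h0, h1, h2⟩ := radius_facts x hx
  apply Summable.of_norm_bounded (cf_summable' a b lam hlam 2 2 _ h0 h1)
  intro m
  rw [norm_mul, norm_mul, norm_mul, norm_pow]
  have e1 : ‖(m:ℂ)‖ * ‖((m:ℂ)-1)‖ ≤ ((m:ℝ)+1)^2 := by
    rw [sq]
    exact mul_le_mul (norm_le_succ m) (norm_sub_one_le m) (norm_nonneg _) (by positivity)
  apply mul_le_mul
  · exact mul_le_mul e1 le_rfl (norm_nonneg _) (by positivity)
  · exact pow_le_pow_left₀ (norm_nonneg x) (le_of_lt h2) _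
  · positivity
  · positivity

lemma hasDerivAt_hyp (a b lam : ℂ) (hlam : ∀ m : ℕ, lam ≠ -((m : ℂ) + 1))
    (x : ℂ) (hx : ‖x‖ < 1) :
    HasDerivAt (hyp a b (1+lam)) (F1 a b lam x) x := by
  obtain ⟨h0, h1, h2⟩ := radius_facts x hx
  set r := (1+‖x‖)/2 with hr
  have key := hasDerivAt_tsum_of_isPreconnected
    (F := ℂ) (𝕜 := ℂ)
    (u := fun m : ℕ => ((m:ℝ)+1)^1 * ‖cf a b lam m‖ * r ^ (m-1))
    (g := fun m y => cf a b lam m * y ^ m)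
    (g' := fun m y => cf a b lam m * ((m:ℂ) * y ^ (m-1)))
    (cf_summable' a b lam hlam 1 1 r h0 h1)
    (Metric.isOpen_ball (x := (0:ℂ)) (ε := r))
    ((convex_ball (0:ℂ) r).isPreconnected)
    (fun m y _ => (hasDerivAt_pow m y).const_mul _)
    (fun m y hy => ?_) (Metric.mem_ball_self h0 : (0:ℂ) ∈ Metric.ball 0 r)
    ?_ (by simpa [Metric.mem_ball, dist_eq_norm] using h2)
  · have e1 : (fun z => ∑' m : ℕ, cf a b lam m * z ^ m) = hyp a b (1+lam) := by
      funext z; rw [hyp_eq]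
    have e2 : ∑' m : ℕ, cf a b lam m * ((m:ℂ) * x ^ (m-1)) = F1 a b lam x := by
      rw [F1]; apply tsum_congr; intro m; ring
    rw [e1, e2] at key
    exact key
  · show ‖cf a b lam m * ((m:ℂ) * y ^ (m-1))‖ ≤ ((m:ℝ)+1)^1 * ‖cf a b lam m‖ * r ^ (m-1)
    rw [norm_mul, norm_mul, norm_pow, pow_one]
    have hy' : ‖y‖ ≤ r := le_of_lt (by simpa [Metric.mem_ball, dist_eq_norm] using hy)
    calc ‖cf a b lam m‖ * (‖(m:ℂ)‖ * ‖y‖^(m-1))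
        ≤ ‖cf a b lam m‖ * (((m:ℝ)+1) * r^(m-1)) := by
          apply mul_le_mul_of_nonneg_left _ (norm_nonneg _)
          exact mul_le_mul (norm_le_succ m) (pow_le_pow_left₀ (norm_nonneg y) hy' _)
            (by positivity) (by positivity)
      _ = ((m:ℝ)+1) * ‖cf a b lam m‖ * r ^ (m-1) := by ring
  · exact summable_term a b lam hlam 0 (by norm_num)

lemma hasDerivAt_F1 (a b lam : ℂ) (hlam : ∀ m : ℕ, lam ≠ -((m : ℂ) + 1))
    (x : ℂ) (hx : ‖x‖ < 1) :
    HasDerivAt (F1 a b lam) (F2 a b lam x) x := by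
  obtain ⟨h0, h1, h2⟩ := radius_facts x hx
  set r := (1+‖x‖)/2 with hr
  have key := hasDerivAt_tsum_of_isPreconnected
    (F := ℂ) (𝕜 := ℂ)
    (u := fun m : ℕ => ((m:ℝ)+1)^2 * ‖cf a b lam m‖ * r ^ (m-2))
    (g := fun m y => (m:ℂ) * cf a b lam m * y ^ (m-1))
    (g' := fun m y => (m:ℂ) * cf a b lam m * (((m-1 : ℕ):ℂ) * y ^ (m-1-1)))
    (cf_summable' a b lam hlam 2 2 r h0 h1)
    (Metric.isOpen_ball (x := (0:ℂ)) (ε := r))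
    ((convex_ball (0:ℂ) r).isPreconnected)
    (fun m y _ => (hasDerivAt_pow (m-1) y).const_mul _)
    (fun m y hy => ?_) (Metric.mem_ball_self h0 : (0:ℂ) ∈ Metric.ball 0 r)
    ?_ (by simpa [Metric.mem_ball, dist_eq_norm] using h2)
  · have e1 : (fun z => ∑' m : ℕ, (m:ℂ) * cf a b lam m * z ^ (m-1)) = F1 a b lam := by
      funext z; rw [F1]
    have e2 : ∑' m : ℕ, (m:ℂ) * cf a b lam m * (((m-1 : ℕ):ℂ) * x ^ (m-1-1))
        = F2 a b lam x := by
      rw [F2]; apply tsum_congr; intro m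
      match m with
      | 0 => simp
      | k+1 =>
        have : (k+1) - 1 - 1 = (k+1) - 2 := by omega
        rw [this]
        push_cast
        ring
    rw [e1, e2] at key
    exact key
  · show ‖(m:ℂ) * cf a b lam m * (((m-1 : ℕ):ℂ) * y ^ (m-1-1))‖
        ≤ ((m:ℝ)+1)^2 * ‖cf a b lam m‖ * r ^ (m-2)
    have hy' : ‖y‖ ≤ r := le_of_lt (by simpa [Metric.mem_ball, dist_eq_norm] using hy)
    have hsub : m - 1 - 1 = m - 2 := by omega
    rw [hsub, norm_mul, norm_mul, norm_mul, norm_pow]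
    have e3 : ‖((m-1 : ℕ):ℂ)‖ ≤ (m:ℝ)+1 := by
      rw [Complex.norm_natCast]
      have : ((m-1 : ℕ):ℝ) ≤ (m:ℝ) := by exact_mod_cast Nat.cast_le.mpr (Nat.sub_le m 1)
      linarith
    calc ‖(m:ℂ)‖ * ‖cf a b lam m‖ * (‖((m-1:ℕ):ℂ)‖ * ‖y‖^(m-2))
        ≤ ((m:ℝ)+1) * ‖cf a b lam m‖ * (((m:ℝ)+1) * r^(m-2)) := by
          apply mul_le_mul
          · exact mul_le_mul (norm_le_succ m) le_rfl (norm_nonneg _) (by positivity)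
          · exact mul_le_mul e3 (pow_le_pow_left₀ (norm_nonneg y) hy' _)
              (by positivity) (by positivity)
          · positivity
          · positivity
      _ = ((m:ℝ)+1)^2 * ‖cf a b lam m‖ * r ^ (m-2) := by ring
  · exact summable_term1 a b lam hlam 0 (by norm_num)


lemma hyp_ode (a b lam : ℂ) (hlam : ∀ m : ℕ, lam ≠ -((m : ℂ) + 1))
    (x : ℂ) (hx : ‖x‖ < 1) :
    x*(1-x) * F2 a b lam x + ((1+lam) - (a+b+1)*x) * F1 a b lam x
      - a*b*(hyp a b (1+lam) x) = 0 := by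
  obtain ⟨h0, h1, h2⟩ := radius_facts x hx
  set r := (1+‖x‖)/2 with hr
  have S0 := summable_term a b lam hlam x hx
  have S1 := summable_term1 a b lam hlam x hx
  have S2 := summable_term2 a b lam hlam x hx
  set D : ℕ → ℂ := fun m => (m:ℂ) * ((m:ℂ) + lam) * cf a b lam m * x ^ (m-1) with hD
  have hTsum : HasSum (fun m : ℕ =>
      x*(1-x) * ((m:ℂ) * ((m:ℂ)-1) * cf a b lam m * x ^ (m-2))
      + ((1+lam) - (a+b+1)*x) * ((m:ℂ) * cf a b lam m * x ^ (m-1))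
      - a*b*(cf a b lam m * x ^ m))
      (x*(1-x) * F2 a b lam x + ((1+lam) - (a+b+1)*x) * F1 a b lam x
        - a*b*(hyp a b (1+lam) x)) := by
    rw [hyp_eq, F1, F2]
    exact ((S2.hasSum.mul_left _).add (S1.hasSum.mul_left _)).sub (S0.hasSum.mul_left _)
  have hrec : ∀ m : ℕ, ((m:ℂ)+1) * (((m:ℂ)+1) + lam) * cf a b lam (m+1)
      = cf a b lam m * ((a+m)*(b+m)) := by
    intro m
    linear_combination cf_rec a b lam hlam m
  have hT : ∀ m : ℕ,
      x*(1-x) * ((m:ℂ) * ((m:ℂ)-1) * cf a b lam m * x ^ (m-2))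
      + ((1+lam) - (a+b+1)*x) * ((m:ℂ) * cf a b lam m * x ^ (m-1))
      - a*b*(cf a b lam m * x ^ m) = D m - D (m+1) := by
    intro m
    match m with
    | 0 =>
      have h := hrec 0
      simp only [hD]
      push_cast at h ⊢
      simp only [Nat.zero_sub, Nat.sub_self, pow_zero]
      norm_num
      linear_combination -h
    | 1 =>
      have h := hrec 1
      simp only [hD]
      push_cast at h ⊢
      norm_num
      linear_combination x * h
    | k+2 =>
      have h := hrec (k+2)
      simp only [hD]
      have e1 : (k+2) - 2 = k := by omega
      have e2 : (k+2) - 1 = k+1 := by omega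
      have e3 : (k+3) - 1 = k+2 := by omega
      rw [e1, e2, e3] at *
      push_cast at h ⊢
      rw [pow_succ, pow_succ]
      linear_combination (x^k * x * x) * h
  have hTel : Tendsto (fun nn : ℕ => ∑ m ∈ Finset.range nn,
      (x*(1-x) * ((m:ℂ) * ((m:ℂ)-1) * cf a b lam m * x ^ (m-2))
      + ((1+lam) - (a+b+1)*x) * ((m:ℂ) * cf a b lam m * x ^ (m-1))
      - a*b*(cf a b lam m * x ^ m))) atTop (nhds 0) := by
    have e : ∀ nn : ℕ, ∑ m ∈ Finset.range nn,
        (x*(1-x) * ((m:ℂ) * ((m:ℂ)-1) * cf a b lam m * x ^ (m-2))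
        + ((1+lam) - (a+b+1)*x) * ((m:ℂ) * cf a b lam m * x ^ (m-1))
        - a*b*(cf a b lam m * x ^ m)) = D 0 - D nn := by
      intro nn
      rw [Finset.sum_congr rfl fun m _ => hT m]
      exact Finset.sum_range_sub' D nn
    simp only [e]
    have hD0 : D 0 = 0 := by simp [hD]
    rw [hD0]
    simp only [zero_sub]
    rw [show (0:ℂ) = -0 by ring]
    apply Tendsto.neg
    -- Tendsto D atTop (nhds 0)
    have hsD : Summable D := by
      apply Summable.of_norm_bounded
        (g := fun m : ℕ => (1+‖lam‖) * (((m:ℝ)+1)^2 * ‖cf a b lam m‖ * r ^ (m-1)))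
        (((cf_summable' a b lam hlam 2 1 r h0 h1)).mul_left _)
      intro m
      simp only [hD, norm_mul, norm_pow]
      have e3 : ‖(m:ℂ) + lam‖ ≤ ((m:ℝ)+1) * (1+‖lam‖) := by
        calc ‖(m:ℂ) + lam‖ ≤ ‖(m:ℂ)‖ + ‖lam‖ := norm_add_le _ _
          _ = (m:ℝ) + ‖lam‖ := by rw [Complex.norm_natCast]
          _ ≤ ((m:ℝ)+1) * (1+‖lam‖) := by nlinarith [norm_nonneg lam, Nat.cast_nonneg (α := ℝ) m]
      calc ‖(m:ℂ)‖ * ‖(m:ℂ) + lam‖ * ‖cf a b lam m‖ * ‖x‖^(m-1)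
          ≤ (((m:ℝ)+1) * (((m:ℝ)+1) * (1+‖lam‖))) * ‖cf a b lam m‖ * r^(m-1) := by
            apply mul_le_mul
            · apply mul_le_mul_of_nonneg_right _ (norm_nonneg _)
              exact mul_le_mul (norm_le_succ m) e3 (norm_nonneg _) (by positivity)
            · exact pow_le_pow_left₀ (norm_nonneg x) (le_of_lt h2) _
            · positivity
            · positivity
        _ = (1+‖lam‖) * (((m:ℝ)+1)^2 * ‖cf a b lam m‖ * r ^ (m-1)) := by ring
    exact hsD.tendsto_atTop_zero
  exact tendsto_nhds_unique hTsum.tendsto_sum_nat hTel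

-- real-variable auxiliary lemmas
lemma U_pos (t : ℝ) : 0 < (1 + Real.exp (2*t))⁻¹ := by positivity

lemma U_lt_one (t : ℝ) : (1 + Real.exp (2*t))⁻¹ < 1 := by
  have he := Real.exp_pos (2*t)
  rw [inv_lt_one_iff₀]
  right; linarith

lemma U_hasDerivAt (t : ℝ) : HasDerivAt (fun s : ℝ => (1 + Real.exp (2*s))⁻¹)
    (-2 * (1 + Real.exp (2*t))⁻¹ * (1 - (1 + Real.exp (2*t))⁻¹)) t := by
  have h1 : HasDerivAt (fun s : ℝ => 2*s) 2 t := by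
    simpa using (hasDerivAt_id t).const_mul 2
  have h2 : HasDerivAt (fun s : ℝ => Real.exp (2*s)) (Real.exp (2*t) * 2) t := h1.exp
  have h3 : HasDerivAt (fun s : ℝ => 1 + Real.exp (2*s)) (Real.exp (2*t) * 2) t :=
    h2.const_add 1
  have hne : 1 + Real.exp (2*t) ≠ 0 := by positivity
  have h4 := h3.inv hne
  convert h4 using 1
  case e'_4 => rfl
  case e'_5 => rfl
  case e'_8 => rfl
  have he := Real.exp_pos (2*t)
  field_simp
  ring

lemma sinh_eq' (t : ℝ) : Real.sinh t = Real.cosh t * (1 - 2 * (1 + Real.exp (2*t))⁻¹) := by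
  rw [Real.sinh_eq, Real.cosh_eq]
  have h1 : Real.exp (2*t) = Real.exp t * Real.exp t := by rw [two_mul, Real.exp_add]
  have h2 : Real.exp (-t) = (Real.exp t)⁻¹ := Real.exp_neg t
  rw [h1, h2]
  have he := Real.exp_pos t
  have hne : 1 + Real.exp t * Real.exp t ≠ 0 := by positivity
  field_simp
  ring

lemma cosh_sq' (t : ℝ) :
    Real.cosh t ^ 2 * (4 * (1 + Real.exp (2*t))⁻¹ * (1 - (1 + Real.exp (2*t))⁻¹)) = 1 := by
  rw [Real.cosh_eq]
  have h1 : Real.exp (2*t) = Real.exp t * Real.exp t := by rw [two_mul, Real.exp_add]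
  have h2 : Real.exp (-t) = (Real.exp t)⁻¹ := Real.exp_neg t
  rw [h1, h2]
  have he := Real.exp_pos t
  have hne : 1 + Real.exp t * Real.exp t ≠ 0 := by positivity
  field_simp
  ring

lemma tanh_eq' (t : ℝ) : Real.tanh t = 1 - 2 * (1 + Real.exp (2*t))⁻¹ := by
  rw [Real.tanh_eq_sinh_div_cosh, sinh_eq' t]
  have h := (Real.cosh_pos t).ne'
  field_simp

-- complex calculus helpers
lemma hasDerivAt_coshPow (e : ℂ) (s : ℝ) :
    HasDerivAt (fun s : ℝ => ((Real.cosh s : ℂ)) ^ e)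
      ((Real.sinh s : ℂ) * (e * ((Real.cosh s : ℂ)) ^ (e - 1))) s := by
  have h1 : HasDerivAt (fun s : ℝ => ((Real.cosh s : ℂ))) ((Real.sinh s : ℂ)) s :=
    (Real.hasDerivAt_cosh s).ofReal_comp
  have hs : ((Real.cosh s : ℂ)) ∈ Complex.slitPlane :=
    Complex.ofReal_mem_slitPlane.2 (Real.cosh_pos s)
  have h2 := (Complex.hasStrictDerivAt_cpow_const (c := e) hs).hasDerivAt
  have h3 := h2.scomp s h1
  simpa [Function.comp_def, smul_eq_mul] using h3

lemma hasDerivAt_comp_ofReal {g : ℝ → ℝ} {g' : ℝ} {s : ℝ} (hg : HasDerivAt g g' s)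
    {F : ℂ → ℂ} {d : ℂ} (hF : HasDerivAt F d ((g s : ℂ))) :
    HasDerivAt (fun s : ℝ => F ((g s : ℂ))) ((g' : ℂ) * d) s := by
  have h1 := hg.ofReal_comp
  have h2 := hF.scomp s h1
  simpa [Function.comp_def, smul_eq_mul] using h2

theorem stmt16 (n : ℕ) (hn : 3 ≤ n) (ρ : ℝ) (hρ : ρ = (n - 1) / 2)
    (lam : ℂ) (hlam : ∀ m : ℕ, lam ≠ -((m : ℂ) + 1)) (j : ℕ)
    (φ : ℝ → ℂ)
    (hφ : φ = fun t => ((Real.cosh t : ℂ)) ^ (-lam - ρ) *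
      hyp (lam + ρ + j) (lam - ρ + 1 - j) (1 + lam) (((1 + Real.exp (2*t))⁻¹ : ℝ))) :
    ∀ t : ℝ, deriv (deriv φ) t
        + ((2 * ρ * Real.tanh t : ℝ) : ℂ) * deriv φ t
        + ((j * (j + n - 2) : ℂ) / ((Real.cosh t : ℂ)) ^ 2) * φ t
      = (lam ^ 2 - (ρ : ℂ) ^ 2) * φ t := by
  intro t
  have hnormU : ∀ s : ℝ, ‖(((1 + Real.exp (2*s))⁻¹ : ℝ) : ℂ)‖ < 1 := by
    intro s
    rw [Complex.norm_real, Real.norm_eq_abs, abs_of_pos (U_pos s)]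
    exact U_lt_one s
  -- first derivative of φ
  have hφd : ∀ s : ℝ, HasDerivAt φ
      (((Real.cosh s : ℂ)) ^ (-lam - (ρ:ℂ)) *
        ((-lam - (ρ:ℂ)) * (1 - 2 * (((1 + Real.exp (2*s))⁻¹ : ℝ) : ℂ)) *
            hyp (lam + ρ + j) (lam - ρ + 1 - j) (1 + lam) (((1 + Real.exp (2*s))⁻¹ : ℝ))
          - 2 * (((1 + Real.exp (2*s))⁻¹ : ℝ) : ℂ) * (1 - (((1 + Real.exp (2*s))⁻¹ : ℝ) : ℂ)) *
            F1 (lam + ρ + j) (lam - ρ + 1 - j) lam (((1 + Real.exp (2*s))⁻¹ : ℝ)))) s := by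
    intro s
    rw [hφ]
    have h1 := hasDerivAt_coshPow (-lam - (ρ:ℂ)) s
    have h2 := hasDerivAt_comp_ofReal (U_hasDerivAt s)
      (hasDerivAt_hyp (lam + ρ + j) (lam - ρ + 1 - j) lam hlam _ (hnormU s))
    have h3 := h1.mul h2
    convert h3 using 1
    case e'_4 => rfl
    case e'_8 => rfl
    have hcne : ((Real.cosh s : ℂ)) ≠ 0 := by
      exact_mod_cast (Real.cosh_pos s).ne'
    have hsc : ((Real.sinh s : ℂ))
        = ((Real.cosh s : ℂ)) * (1 - 2 * (((1 + Real.exp (2*s))⁻¹ : ℝ) : ℂ)) := by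
      exact_mod_cast sinh_eq' s
    have hcc : ((Real.cosh s : ℂ)) ^ (-lam - (ρ:ℂ) - 1) * ((Real.cosh s : ℂ))
        = ((Real.cosh s : ℂ)) ^ (-lam - (ρ:ℂ)) := by
      have h := Complex.cpow_add (x := ((Real.cosh s : ℂ))) (-lam - (ρ:ℂ) - 1) 1 hcne
      rw [Complex.cpow_one] at h
      rw [← h]
      congr 1
      ring
    have hU' : (((-2 * (1 + Real.exp (2*s))⁻¹ * (1 - (1 + Real.exp (2*s))⁻¹) : ℝ)) : ℂ)
        = -2 * (((1 + Real.exp (2*s))⁻¹ : ℝ) : ℂ) * (1 - (((1 + Real.exp (2*s))⁻¹ : ℝ) : ℂ)) := by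
      push_cast; ring
    rw [hsc, hU']
    linear_combination (-((-lam - (ρ:ℂ)) * (1 - 2 * (((1 + Real.exp (2*s))⁻¹ : ℝ) : ℂ)) *
      hyp (lam + ρ + j) (lam - ρ + 1 - j) (1 + lam) (((1 + Real.exp (2*s))⁻¹ : ℝ)))) * hcc
  have hd1 : deriv φ = (fun s : ℝ =>
      ((Real.cosh s : ℂ)) ^ (-lam - (ρ:ℂ)) *
        ((-lam - (ρ:ℂ)) * (1 - 2 * (((1 + Real.exp (2*s))⁻¹ : ℝ) : ℂ)) *
            hyp (lam + ρ + j) (lam - ρ + 1 - j) (1 + lam) (((1 + Real.exp (2*s))⁻¹ : ℝ))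
          - 2 * (((1 + Real.exp (2*s))⁻¹ : ℝ) : ℂ) * (1 - (((1 + Real.exp (2*s))⁻¹ : ℝ) : ℂ)) *
            F1 (lam + ρ + j) (lam - ρ + 1 - j) lam (((1 + Real.exp (2*s))⁻¹ : ℝ)))) :=
    funext fun s => (hφd s).deriv
  -- second derivative at t
  have hvt := (U_hasDerivAt t).ofReal_comp
  have hH := hasDerivAt_comp_ofReal (U_hasDerivAt t)
    (hasDerivAt_hyp (lam + ρ + j) (lam - ρ + 1 - j) lam hlam _ (hnormU t))
  have hF1H := hasDerivAt_comp_ofReal (U_hasDerivAt t)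
    (hasDerivAt_F1 (lam + ρ + j) (lam - ρ + 1 - j) lam hlam _ (hnormU t))
  have t1a := (hvt.const_mul (2:ℂ)).const_sub 1
  have t1b := t1a.const_mul (-lam - (ρ:ℂ))
  have t1 := t1b.mul hH
  have t2a := hvt.const_mul (2:ℂ)
  have t2b := hvt.const_sub 1
  have t2c := t2a.mul t2b
  have t2 := t2c.mul hF1H
  have hQ := t1.sub t2
  have hbig := (hasDerivAt_coshPow (-lam - (ρ:ℂ)) t).mul hQ
  have hcne : ((Real.cosh t : ℂ)) ≠ 0 := by exact_mod_cast (Real.cosh_pos t).ne'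
  have hsc : ((Real.sinh t : ℂ))
      = ((Real.cosh t : ℂ)) * (1 - 2 * (((1 + Real.exp (2*t))⁻¹ : ℝ) : ℂ)) := by
    exact_mod_cast sinh_eq' t
  have hcc : ((Real.cosh t : ℂ)) ^ (-lam - (ρ:ℂ) - 1) * ((Real.cosh t : ℂ))
      = ((Real.cosh t : ℂ)) ^ (-lam - (ρ:ℂ)) := by
    have h := Complex.cpow_add (x := ((Real.cosh t : ℂ))) (-lam - (ρ:ℂ) - 1) 1 hcne
    rw [Complex.cpow_one] at h
    rw [← h]
    congr 1
    ring
  have hdd : HasDerivAt (deriv φ)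
      (((Real.cosh t : ℂ)) ^ (-lam - (ρ:ℂ) - 1) * ((Real.cosh t : ℂ)) *
        ((-lam - (ρ:ℂ))^2 * (1 - 2 * (((1 + Real.exp (2*t))⁻¹ : ℝ) : ℂ))^2 *
            hyp (lam + ρ + j) (lam - ρ + 1 - j) (1 + lam) (((1 + Real.exp (2*t))⁻¹ : ℝ))
          + 4 * (-lam - (ρ:ℂ)) * (((1 + Real.exp (2*t))⁻¹ : ℝ) : ℂ) *
              (1 - (((1 + Real.exp (2*t))⁻¹ : ℝ) : ℂ)) *
            hyp (lam + ρ + j) (lam - ρ + 1 - j) (1 + lam) (((1 + Real.exp (2*t))⁻¹ : ℝ))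
          - 4 * (-lam - (ρ:ℂ)) * (((1 + Real.exp (2*t))⁻¹ : ℝ) : ℂ) *
              (1 - (((1 + Real.exp (2*t))⁻¹ : ℝ) : ℂ)) *
              (1 - 2 * (((1 + Real.exp (2*t))⁻¹ : ℝ) : ℂ)) *
            F1 (lam + ρ + j) (lam - ρ + 1 - j) lam (((1 + Real.exp (2*t))⁻¹ : ℝ))
          + 4 * (((1 + Real.exp (2*t))⁻¹ : ℝ) : ℂ) * (1 - (((1 + Real.exp (2*t))⁻¹ : ℝ) : ℂ)) *
              (1 - 2 * (((1 + Real.exp (2*t))⁻¹ : ℝ) : ℂ)) *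
            F1 (lam + ρ + j) (lam - ρ + 1 - j) lam (((1 + Real.exp (2*t))⁻¹ : ℝ))
          + 4 * (((1 + Real.exp (2*t))⁻¹ : ℝ) : ℂ)^2 *
              (1 - (((1 + Real.exp (2*t))⁻¹ : ℝ) : ℂ))^2 *
            F2 (lam + ρ + j) (lam - ρ + 1 - j) lam (((1 + Real.exp (2*t))⁻¹ : ℝ)))) t := by
    rw [hd1]
    convert hbig using 1
    case e'_4 => rfl
    case e'_8 => rfl
    have hU' : (((-2 * (1 + Real.exp (2*t))⁻¹ * (1 - (1 + Real.exp (2*t))⁻¹) : ℝ)) : ℂ)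
        = -2 * (((1 + Real.exp (2*t))⁻¹ : ℝ) : ℂ) * (1 - (((1 + Real.exp (2*t))⁻¹ : ℝ) : ℂ)) := by
      push_cast; ring
    simp only [Pi.mul_apply, Pi.sub_apply]
    rw [hsc, hU', hcc]
    linear_combination (-((-lam - (ρ:ℂ)) * (1 - 2 * (((1 + Real.exp (2*t))⁻¹ : ℝ) : ℂ)) *
      ((-lam - (ρ:ℂ)) * (1 - 2 * (((1 + Real.exp (2*t))⁻¹ : ℝ) : ℂ)) *
          hyp (lam + ρ + j) (lam - ρ + 1 - j) (1 + lam) (((1 + Real.exp (2*t))⁻¹ : ℝ))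
        - 2 * (((1 + Real.exp (2*t))⁻¹ : ℝ) : ℂ) * (1 - (((1 + Real.exp (2*t))⁻¹ : ℝ) : ℂ)) *
          F1 (lam + ρ + j) (lam - ρ + 1 - j) lam (((1 + Real.exp (2*t))⁻¹ : ℝ))))) * hcc
  -- main computation
  rw [hdd.deriv, (hφd t).deriv]
  simp only [hφ]
  have h2ρt : ((2 * ρ * Real.tanh t : ℝ) : ℂ)
      = 2 * (ρ:ℂ) * (1 - 2 * (((1 + Real.exp (2*t))⁻¹ : ℝ) : ℂ)) := by
    rw [tanh_eq' t]; push_cast; ring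
  have hc2C : ((Real.cosh t : ℂ))^2 * (4 * (((1 + Real.exp (2*t))⁻¹ : ℝ) : ℂ) *
      (1 - (((1 + Real.exp (2*t))⁻¹ : ℝ) : ℂ))) = 1 := by
    exact_mod_cast cosh_sq' t
  have hdivj : ((j * (j + n - 2) : ℂ)) / ((Real.cosh t : ℂ))^2
      = (j * (j + n - 2) : ℂ) * (4 * (((1 + Real.exp (2*t))⁻¹ : ℝ) : ℂ) *
        (1 - (((1 + Real.exp (2*t))⁻¹ : ℝ) : ℂ))) := by
    rw [div_eq_iff (pow_ne_zero 2 hcne)]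
    linear_combination (-(j * (j + n - 2) : ℂ)) * hc2C
  have hρc : ((n:ℂ)) = 2 * (ρ:ℂ) + 1 := by
    have h1 : (n:ℝ) = 2*ρ + 1 := by rw [hρ]; ring
    exact_mod_cast h1
  have hODE := hyp_ode (lam + ρ + j) (lam - ρ + 1 - j) lam hlam
    (((1 + Real.exp (2*t))⁻¹ : ℝ)) (hnormU t)
  rw [h2ρt, hdivj, hρc, ← hcc]
  linear_combination (4 * (((1 + Real.exp (2*t))⁻¹ : ℝ) : ℂ) *
    (1 - (((1 + Real.exp (2*t))⁻¹ : ℝ) : ℂ)) *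
    (((Real.cosh t : ℂ)) ^ (-lam - (ρ:ℂ) - 1) * ((Real.cosh t : ℂ)))) * hODE
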